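/- Let D be a dimension structure with S linearly ordered, and equip X with a partial order. Then the condition 'x ≤ y implies μ_D(x) ≤ μ_D(y) in the lexicographic order on S̄ × [0,+∞]' is equivalent to the condition 'x ≤ y implies μ_s(x) ≤ μ_s(y) for all s ∈ S'. -/

import Mathlib

/-- The extension of `μ` to `S̄ = WithBot (WithTop S)`, with the conventions
`μ₋∞(x) = +∞` and `μ₊∞(x) = 0`. -/
noncomputable def muBar {X S : Type*} (μ : S → X → ENNReal)
    (d : WithBot (WithTop S)) (x : X) : ENNReal :=
  WithBot.recBotCoe ⊤ (fun t => WithTop.recTopCoe 0 (fun s => μ s x) t) d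

theorem stmt8 {X S : Type*} [LinearOrder S] [PartialOrder X] (μ : S → X → ENNReal)
    (ax1 : ∀ (x : X) (s p : S), s < p → μ s x ≠ ⊤ → μ p x = 0)
    (dimx : X → WithBot (WithTop S))
    (hdim : ∀ x : X,
      IsGLB ((fun s : S => ((s : WithTop S) : WithBot (WithTop S))) '' {s | μ s x ≠ ⊤}) (dimx x)) :
    (∀ x y : X, x ≤ y →
        (toLex (dimx x, muBar μ (dimx x) x) : (WithBot (WithTop S)) ×ₗ ENNReal)
          ≤ toLex (dimx y, muBar μ (dimx y) y)) ↔
    (∀ x y : X, x ≤ y → ∀ s : S, μ s x ≤ μ s y) := by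
  have L1 : ∀ (x : X) (s : S), ((s : WithTop S) : WithBot (WithTop S)) < dimx x → μ s x = ⊤ := by
    intro x s hs
    by_contra h
    exact absurd ((hdim x).1 ⟨s, h, rfl⟩) (not_le.mpr hs)
  have L2 : ∀ (x : X) (s : S), dimx x < ((s : WithTop S) : WithBot (WithTop S)) → μ s x = 0 := by
    intro x s hs
    have h2 : ¬ ((s : WithTop S) : WithBot (WithTop S)) ∈
        lowerBounds ((fun s : S => ((s : WithTop S) : WithBot (WithTop S))) '' {s | μ s x ≠ ⊤}) :=
      fun h => absurd ((hdim x).2 h) (not_le.mpr hs)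
    rw [mem_lowerBounds] at h2
    push_neg at h2
    obtain ⟨t, ⟨s', hs', rfl⟩, hlt⟩ := h2
    have hss : s' < s := by simpa using hlt
    exact ax1 x s' s hss hs'
  constructor
  · intro H x y hxy s
    have hle : dimx x ≤ dimx y := by
      rcases Prod.Lex.le_iff.mp (H x y hxy) with h | ⟨h, _⟩
      · exact le_of_lt h
      · exact le_of_eq h
    rcases lt_trichotomy ((s : WithTop S) : WithBot (WithTop S)) (dimx x) with h | h | h
    · rw [L1 x s h, L1 y s (lt_of_lt_of_le h hle)]
    · rcases Prod.Lex.le_iff.mp (H x y hxy) with h' | ⟨h', hle2⟩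
      · rw [L1 y s (h ▸ h')]; exact le_top
      · simp only [ofLex_toLex] at h' hle2
        rw [← h', ← h] at hle2
        simpa [muBar] using hle2
    · rw [L2 x s h]; exact zero_le
  · intro H x y hxy
    have hdle : dimx x ≤ dimx y := by
      refine (hdim y).2 ?_
      rintro t ⟨s, hs, rfl⟩
      refine (hdim x).1 ⟨s, ?_, rfl⟩
      intro hx
      exact hs (top_le_iff.mp (hx ▸ H x y hxy s))
    rcases eq_or_lt_of_le hdle with heq | hlt
    · rw [Prod.Lex.le_iff]
      right
      refine ⟨heq, ?_⟩
      rw [← heq]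
      rcases hd : dimx x with _ | (_ | s)
      · exact le_rfl
      · exact le_rfl
      · exact H x y hxy s
    · rw [Prod.Lex.le_iff]
      left
      exact hlt
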